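/- For every positive integer k, the graph G_k (bipartite with parts A = {1,...,2^k} and one vertex in B for each nonempty interval of A, adjacent exactly to the elements of that interval) admits a proper conflict-free coloring with k+2 colors in which only k+1 colors are used on A. -/

import Mathlib

/-- The number of neighbors of `v` colored `t`. -/
noncomputable def nbrColorCount {V : Type*} {α : Type*} (G : SimpleGraph V) (c : V → α) (v : V) (t : α) : ℕ :=
  Nat.card {x // G.Adj v x ∧ c x = t}

/-- The set of witnesses of `v`: colors appearing an odd number of times among neighbors of `v`. -/
def witnessSet {V : Type*} {α : Type*} (G : SimpleGraph V) (c : V → α) (v : V) : Set α :=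
  {t | Odd (nbrColorCount G c v t)}

/-- A proper coloring. -/
def properColoring {V : Type*} {α : Type*} (G : SimpleGraph V) (c : V → α) : Prop :=
  ∀ ⦃u v⦄, G.Adj u v → c u ≠ c v

/-- A conflict-free coloring. -/
def conflictFree {V : Type*} {α : Type*} (G : SimpleGraph V) (c : V → α) : Prop :=
  ∀ v, (∃ x, G.Adj v x) → ∃ t, nbrColorCount G c v t = 1

/-- The bipartite graph `G_k`: one side is `{1,…,2^k}` (modeled by `Fin (2^k)`), the
other side has a vertex for each nonempty interval `[a,b]`, adjacent exactly
to the elements of that interval. -/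
def intervalGraph (k : ℕ) :
    SimpleGraph (Fin (2^k) ⊕ {p : Fin (2^k) × Fin (2^k) // p.1 ≤ p.2}) :=
  SimpleGraph.fromRel (fun u w =>
    ∃ (x : Fin (2^k)) (p : {p : Fin (2^k) × Fin (2^k) // p.1 ≤ p.2}),
      u = Sum.inl x ∧ w = Sum.inr p ∧ p.1.1 ≤ x ∧ x ≤ p.1.2)

/-! ### Auxiliary material -/

lemma val2_le {k n : ℕ} (hn : 0 < n) (h : n ≤ 2^k) : padicValNat 2 n ≤ k := by
  have h1 : 2 ^ padicValNat 2 n ∣ n := pow_padicValNat_dvd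
  have h2 : 2 ^ padicValNat 2 n ≤ 2 ^ k := le_trans (Nat.le_of_dvd hn h1) h
  exact (Nat.pow_le_pow_iff_right (by norm_num)).mp h2

lemma helper2 {x y j : ℕ} (hx : 0 < x) (hxy : x < y)
    (hvx : padicValNat 2 x = j) (hvy : padicValNat 2 y = j) :
    ∃ n, x < n ∧ n ≤ y ∧ j < padicValNat 2 n := by
  have hy : 0 < y := lt_trans hx hxy
  have hdx : 2 ^ j ∣ x := hvx ▸ pow_padicValNat_dvd
  have hdy : 2 ^ j ∣ y := hvy ▸ pow_padicValNat_dvd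
  have hjpos : 0 < 2 ^ j := by positivity
  refine ⟨x + 2^j, by omega, ?_, ?_⟩
  · have hd : 2 ^ j ∣ y - x := Nat.dvd_sub hdy hdx
    have : 2 ^ j ≤ y - x := Nat.le_of_dvd (by omega) hd
    omega
  · have hnd : ¬ 2 ^ (j+1) ∣ x := by
      intro hc
      rcases (padicValNat_dvd_iff (j+1) x).mp hc with h | h
      · omega
      · omega
    have hdd : 2 ^ (j+1) ∣ x + 2^j := by
      obtain ⟨o, ho⟩ := hdx
      have hodd : o % 2 = 1 := by
        rcases Nat.even_or_odd o with he | ho2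
        · exfalso; exact hnd (by rcases he with ⟨m, hm⟩; exact ⟨m, by subst ho hm; ring⟩)
        · exact Nat.odd_iff.mp ho2
      obtain ⟨m, hm⟩ : ∃ m, o = 2*m+1 := ⟨o/2, by omega⟩
      exact ⟨m + 1, by subst ho hm; ring⟩
    have := (padicValNat_dvd_iff (j+1) (x + 2^j)).mp hdd
    omega

lemma exists_unique_max {a b : ℕ} (h : a ≤ b) :
    ∃ m, a ≤ m ∧ m ≤ b ∧ ∀ x, a ≤ x → x ≤ b →
      padicValNat 2 (x+1) = padicValNat 2 (m+1) → x = m := by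
  obtain ⟨m, hm, hmax⟩ := Finset.exists_max_image (Finset.Icc a b)
    (fun x => padicValNat 2 (x+1)) ⟨a, Finset.mem_Icc.mpr ⟨le_refl a, h⟩⟩
  simp only [Finset.mem_Icc] at hm
  refine ⟨m, hm.1, hm.2, fun x hax hxb hv => ?_⟩
  by_contra hne
  rcases Nat.lt_or_ge x m with hlt | hge
  · obtain ⟨n, hn1, hn2, hn3⟩ :=
      helper2 (x := x+1) (y := m+1) (j := padicValNat 2 (m+1)) (by omega) (by omega) hv rfl
    have := hmax (n - 1) (Finset.mem_Icc.mpr ⟨by omega, by omega⟩)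
    rw [show n - 1 + 1 = n by omega] at this
    omega
  · obtain ⟨n, hn1, hn2, hn3⟩ :=
      helper2 (x := m+1) (y := x+1) (j := padicValNat 2 (m+1)) (by omega) (by omega) rfl hv
    have := hmax (n - 1) (Finset.mem_Icc.mpr ⟨by omega, by omega⟩)
    rw [show n - 1 + 1 = n by omega] at this
    omega

/-- The coloring: an element `x` of `A` gets the 2-adic valuation of `x+1` (the ruler
sequence); a singleton interval gets color `0` or `1` (whichever differs from its
element's color); every other interval gets color `k+1`. -/
def myColor (k : ℕ) : (Fin (2^k) ⊕ {p : Fin (2^k) × Fin (2^k) // p.1 ≤ p.2}) → Fin (k+2)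
  | Sum.inl x => ⟨padicValNat 2 (x.1+1), by
      have h := val2_le (k := k) (n := x.1+1) (by omega) (by have := x.isLt; omega)
      omega⟩
  | Sum.inr p =>
      if p.1.1 = p.1.2 then
        (if padicValNat 2 (p.1.1.1+1) = 0 then ⟨1, by omega⟩ else ⟨0, by omega⟩)
      else ⟨k+1, by omega⟩

lemma adj_inl_inr (k : ℕ) (x : Fin (2^k)) (p : {p : Fin (2^k) × Fin (2^k) // p.1 ≤ p.2}) :
    (intervalGraph k).Adj (Sum.inl x) (Sum.inr p) ↔ p.1.1 ≤ x ∧ x ≤ p.1.2 := by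
  simp only [intervalGraph, SimpleGraph.fromRel_adj]
  constructor
  · rintro ⟨-, h | h⟩
    · obtain ⟨y, q, hy, hq, h1, h2⟩ := h
      cases hy; cases hq; exact ⟨h1, h2⟩
    · obtain ⟨y, q, hy, -⟩ := h; exact absurd hy (by simp)
  · rintro ⟨h1, h2⟩
    exact ⟨by simp, Or.inl ⟨x, p, rfl, rfl, h1, h2⟩⟩

lemma adj_inl_inl (k : ℕ) (x y : Fin (2^k)) :
    ¬ (intervalGraph k).Adj (Sum.inl x) (Sum.inl y) := by
  simp [intervalGraph, SimpleGraph.fromRel_adj]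

lemma adj_inr_inr (k : ℕ) (p q : {p : Fin (2^k) × Fin (2^k) // p.1 ≤ p.2}) :
    ¬ (intervalGraph k).Adj (Sum.inr p) (Sum.inr q) := by
  simp [intervalGraph, SimpleGraph.fromRel_adj]

lemma color_ne (k : ℕ) (x : Fin (2^k)) (p : {p : Fin (2^k) × Fin (2^k) // p.1 ≤ p.2})
    (h1 : p.1.1 ≤ x) (h2 : x ≤ p.1.2) :
    myColor k (Sum.inl x) ≠ myColor k (Sum.inr p) := by
  have hvle : padicValNat 2 (x.1+1) ≤ k :=
    val2_le (by omega) (by have := x.isLt; omega)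
  simp only [myColor]
  split_ifs with hsing hz
  · have hx : x = p.1.1 := le_antisymm (by rw [hsing]; exact h2) h1
    have hx1 : x.1 = p.1.1.1 := congrArg Fin.val hx
    intro hc
    rw [Fin.mk.injEq] at hc
    rw [hx1] at hc
    omega
  · have hx : x = p.1.1 := le_antisymm (by rw [hsing]; exact h2) h1
    have hx1 : x.1 = p.1.1.1 := congrArg Fin.val hx
    intro hc
    rw [Fin.mk.injEq] at hc
    rw [hx1] at hc
    exact hz hc
  · intro hc
    rw [Fin.mk.injEq] at hc
    omega

theorem stmt_14 (k : ℕ) (hk : 1 ≤ k) :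
    ∃ c : Fin (2^k) ⊕ {p : Fin (2^k) × Fin (2^k) // p.1 ≤ p.2} → Fin (k + 2),
      properColoring (intervalGraph k) c ∧ conflictFree (intervalGraph k) c ∧
      (Finset.univ.image (fun x : Fin (2^k) => c (Sum.inl x))).card ≤ k + 1 := by
  refine ⟨myColor k, ?_, ?_, ?_⟩
  · -- proper
    rintro (x | p) (y | q) h
    · exact absurd h (adj_inl_inl k x y)
    · rw [adj_inl_inr] at h
      exact color_ne k x q h.1 h.2
    · rw [(intervalGraph k).adj_comm, adj_inl_inr] at h
      exact (color_ne k y p h.1 h.2).symm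
    · exact absurd h (adj_inr_inr k p q)
  · -- conflict free
    rintro (x | p) -
    · refine ⟨myColor k (Sum.inr ⟨(x, x), le_refl x⟩), ?_⟩
      rw [nbrColorCount, Nat.card_eq_one_iff_exists]
      refine ⟨⟨Sum.inr ⟨(x, x), le_refl x⟩,
        (adj_inl_inr k x _).mpr ⟨le_refl x, le_refl x⟩, rfl⟩, ?_⟩
      rintro ⟨(y | q), hadj, hcol⟩
      · exact absurd hadj (adj_inl_inl k x y)
      · rw [adj_inl_inr] at hadj
        have ht1 : (myColor k (Sum.inr ⟨(x, x), le_refl x⟩)).1 ≤ 1 := by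
          simp only [myColor]
          split_ifs <;> simp
        have hq : q.1.1 = q.1.2 := by
          by_contra hne
          have hv : (myColor k (Sum.inr q)).1 = k+1 := by
            simp only [myColor, if_neg hne]
          rw [hcol] at hv
          omega
        have hxle : x ≤ q.1.1 := by rw [hq]; exact hadj.2
        have hx1 : q.1.1 = x := le_antisymm hadj.1 hxle
        have hq1 : q = ⟨(x, x), le_refl x⟩ := by
          apply Subtype.ext
          have hx2 : q.1.2 = x := by rw [← hq]; exact hx1
          exact Prod.ext hx1 hx2
        apply Subtype.ext
        simp only
        rw [hq1]
    · obtain ⟨m, hm1, hm2, hmu⟩ := exists_unique_max (a := p.1.1.1) (b := p.1.2.1) p.2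
      have hmlt : m < 2^k := lt_of_le_of_lt hm2 p.1.2.isLt
      refine ⟨myColor k (Sum.inl ⟨m, hmlt⟩), ?_⟩
      rw [nbrColorCount, Nat.card_eq_one_iff_exists]
      have hadjm : (intervalGraph k).Adj (Sum.inr p) (Sum.inl ⟨m, hmlt⟩) :=
        ((adj_inl_inr k ⟨m, hmlt⟩ p).mpr ⟨hm1, hm2⟩).symm
      refine ⟨⟨Sum.inl ⟨m, hmlt⟩, hadjm, rfl⟩, ?_⟩
      rintro ⟨(y | q), hadj, hcol⟩
      · rw [(intervalGraph k).adj_comm, adj_inl_inr] at hadj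
        have hveq : padicValNat 2 (y.1+1) = padicValNat 2 (m+1) := by
          simpa only [myColor, Fin.mk.injEq] using hcol
        have hy : y.1 = m := hmu y.1 hadj.1 hadj.2 hveq
        apply Subtype.ext
        simp only
        congr 1
        exact Fin.ext hy
      · exact absurd hadj (adj_inr_inr k p q)
  · -- at most k+1 colors on A
    have hsub : (Finset.univ.image (fun x : Fin (2^k) => myColor k (Sum.inl x))) ⊆
        Finset.univ.image (Fin.castLE (by omega : k+1 ≤ k+2)) := by
      intro t ht
      simp only [Finset.mem_image] at ht ⊢
      obtain ⟨x, -, rfl⟩ := ht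
      have hle : padicValNat 2 (x.1+1) ≤ k :=
        val2_le (by omega) (by have := x.isLt; omega)
      refine ⟨⟨padicValNat 2 (x.1+1), by omega⟩, Finset.mem_univ _, ?_⟩
      apply Fin.ext
      simp [myColor, Fin.castLE]
    calc (Finset.univ.image (fun x : Fin (2^k) => myColor k (Sum.inl x))).card
        ≤ (Finset.univ.image (Fin.castLE (by omega : k+1 ≤ k+2))).card :=
          Finset.card_le_card hsub
      _ ≤ (Finset.univ : Finset (Fin (k+1))).card := Finset.card_image_le
      _ = k+1 := by simp
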